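/- Let t_f > 0, let x : [0,t_f] → ℝ^{n_x} be three times continuously differentiable and u : [0,t_f] → ℝ^{n_u} be twice continuously differentiable, and suppose x'(t) = f(x(t), u(t)) for all t ∈ [0,t_f], where f : ℝ^{n_x} × ℝ^{n_u} → ℝ^{n_x} is Lipschitz continuous. Fix C_t > 0, and for each pair (K,N) with K, N ≥ 1 let 0 = t_0^{(K)} < ... < t_K^{(K)} = t_f be knots with t_k^{(K)} − t_{k−1}^{(K)} ≤ C_t/K, and let x_M and u_M be the componentwise composite Bernstein approximants of x and u with K segments of degree N. Then for every ε > 0 there exist K* and N* such that for all K ≥ K* and N ≥ N*, and for all t ∈ [0,t_f] not equal to a knot, ‖x_M'(t) − f(x_M(t), u_M(t))‖ ≤ ε, where x_M'(t) denotes the derivative of the polynomial piece containing t. -/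

import Mathlib

/-- Bernstein basis polynomial of degree `N`, index `j`, on `[a,b]`:
`b_{j,N}(t) = (N choose j) (t-a)^j (b-t)^(N-j) / (b-a)^N`. -/
noncomputable def bern (a b : ℝ) (N j : ℕ) (t : ℝ) : ℝ :=
  (N.choose j : ℝ) * (t - a) ^ j * (b - t) ^ (N - j) / (b - a) ^ N

/-- The (componentwise) polynomial piece of the composite Bernstein approximant of a
vector-valued function on a segment `[a,b]`: `Σ_{j=0}^N b_{j,N}(t) • x(a + j(b−a)/N)`. -/
noncomputable def bernApproxV {n : ℕ} (x : ℝ → EuclideanSpace ℝ (Fin n))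
    (a b : ℝ) (N : ℕ) (t : ℝ) : EuclideanSpace ℝ (Fin n) :=
  ∑ j ∈ Finset.range (N + 1), bern a b N j t • x (a + (j : ℝ) * (b - a) / (N : ℝ))


variable {E : Type*} [NormedAddCommGroup E] [NormedSpace ℝ E]

lemma bern_nonneg {a b t : ℝ} (ht : t ∈ Set.Icc a b) (M j : ℕ) :
    0 ≤ bern a b M j t := by
  obtain ⟨h1, h2⟩ := ht
  have hab : (0:ℝ) ≤ b - a := by linarith
  unfold bern
  have h1' : (0:ℝ) ≤ t - a := by linarith
  have h2' : (0:ℝ) ≤ b - t := by linarith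
  positivity

lemma bern_sum {a b : ℝ} (hab : a < b) (M : ℕ) (t : ℝ) :
    ∑ j ∈ Finset.range (M+1), bern a b M j t = 1 := by
  have h : (b - a) ^ M ≠ 0 := pow_ne_zero _ (sub_ne_zero.mpr hab.ne')
  unfold bern
  rw [← Finset.sum_div, div_eq_one_iff_eq h]
  have := add_pow (t - a) (b - t) M
  have hba : t - a + (b - t) = b - a := by ring
  rw [hba] at this
  rw [this]
  exact Finset.sum_congr rfl fun j _ => by ring

/-- key nat identity -/
lemma choose_id (M j : ℕ) : (M+1).choose j * (M+1-j) = (M+1) * M.choose j := by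
  have h1 := Nat.choose_succ_right_eq (M+1) j
  have h2 := Nat.add_one_mul_choose_eq M j
  rw [← h1]
  exact h2.symm

lemma sum_bern_hasDerivAt (y : ℕ → E) {a b : ℝ} (hab : a < b) (M : ℕ) (t : ℝ) :
    HasDerivAt (fun s => ∑ j ∈ Finset.range (M+1+1), bern a b (M+1) j s • y j)
      (∑ j ∈ Finset.range (M+1), (((M:ℝ)+1)/(b-a) * bern a b M j t) • (y (j+1) - y j)) t := by
  have hba : (b - a) ≠ 0 := sub_ne_zero.mpr hab.ne'
  -- per-term derivative
  set P : ℕ → ℝ := fun j => ((M+1).choose j : ℝ) / (b-a)^(M+1) *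
      ((j : ℝ) * (t-a)^(j-1) * (b-t)^(M+1-j)) with hP
  set Q : ℕ → ℝ := fun j => ((M+1).choose j : ℝ) / (b-a)^(M+1) *
      (((M+1-j : ℕ) : ℝ) * (t-a)^j * (b-t)^(M+1-j-1)) with hQ
  have hderiv : HasDerivAt (fun s => ∑ j ∈ Finset.range (M+1+1), bern a b (M+1) j s • y j)
      (∑ j ∈ Finset.range (M+1+1), (P j - Q j) • y j) t := by
    apply HasDerivAt.fun_sum
    intro j hj
    have h1 : HasDerivAt (fun s : ℝ => (s - a)^j) ((j:ℝ) * (t-a)^(j-1) * 1) t :=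
      ((hasDerivAt_id t).sub_const a).pow j
    have h2 : HasDerivAt (fun s : ℝ => (b - s)^(M+1-j))
        (((M+1-j : ℕ):ℝ) * (b-t)^(M+1-j-1) * (-1)) t := by
      have := ((hasDerivAt_id t).const_sub b).pow (M+1-j)
      exact this
    have h3 := (h1.mul h2).const_mul (((M+1).choose j : ℝ) / (b-a)^(M+1))
    have heq : (fun s => bern a b (M+1) j s • y j)
        = fun s => (((M+1).choose j : ℝ) / (b-a)^(M+1) * ((s-a)^j * (b-s)^(M+1-j))) • y j := by
      funext s; congr 1; unfold bern; ring
    rw [heq]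
    have := h3.smul_const (y j)
    convert this using 1
    · rfl
    simp only [hP, hQ]
    ring
  convert hderiv using 1
  -- now the sum identity
  have hQA : ∀ j ∈ Finset.range (M+1), Q j = ((M:ℝ)+1)/(b-a) * bern a b M j t := by
    intro j hj
    simp only [hQ]
    unfold bern
    have hc : (((M+1).choose j : ℝ) * ((M+1-j : ℕ) : ℝ)) = ((M:ℝ)+1) * (M.choose j : ℝ) := by
      exact_mod_cast congrArg (Nat.cast : ℕ → ℝ) (choose_id M j)
    have hjM : j ≤ M := by simpa using Nat.lt_succ_iff.mp (Finset.mem_range.mp hj)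
    have he1 : M+1-j-1 = M - j := by omega
    rw [he1]
    have hpow : (b-a)^(M+1) = (b-a) * (b-a)^M := by ring
    rw [hpow]
    field_simp
    linear_combination ((t-a)^j * (b-t)^(M-j)) * hc
  have hPA : ∀ j ∈ Finset.range (M+1), P (j+1) = ((M:ℝ)+1)/(b-a) * bern a b M j t := by
    intro j hj
    simp only [hP]
    unfold bern
    have hc : (((M+1).choose (j+1) : ℝ) * ((j:ℝ)+1)) = ((M:ℝ)+1) * (M.choose j : ℝ) := by
      have h2 := Nat.add_one_mul_choose_eq M j
      exact_mod_cast congrArg (Nat.cast : ℕ → ℝ) h2.symm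
    have he1 : M+1-(j+1) = M - j := by omega
    have he2 : j+1-1 = j := by omega
    rw [he1, he2]
    have hpow : (b-a)^(M+1) = (b-a) * (b-a)^M := by ring
    rw [hpow]
    push_cast
    field_simp
    linear_combination ((t-a)^j * (b-t)^(M-j)) * hc
  have hQtop : Q (M+1) = 0 := by
    simp only [hQ]
    simp
  have hP0 : P 0 = 0 := by
    simp only [hP]
    simp
  calc ∑ j ∈ Finset.range (M+1), (((M:ℝ)+1)/(b-a) * bern a b M j t) • (y (j+1) - y j)
      = ∑ j ∈ Finset.range (M+1), ((((M:ℝ)+1)/(b-a) * bern a b M j t) • y (j+1)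
          - (((M:ℝ)+1)/(b-a) * bern a b M j t) • y j) := by
        refine Finset.sum_congr rfl fun j _ => ?_; rw [smul_sub]
    _ = ∑ j ∈ Finset.range (M+1), (((M:ℝ)+1)/(b-a) * bern a b M j t) • y (j+1)
          - ∑ j ∈ Finset.range (M+1), (((M:ℝ)+1)/(b-a) * bern a b M j t) • y j :=
        Finset.sum_sub_distrib _ _
    _ = ∑ j ∈ Finset.range (M+1), P (j+1) • y (j+1)
          - ∑ j ∈ Finset.range (M+1), Q j • y j := by
        congr 1
        · exact Finset.sum_congr rfl fun j hj => by rw [hPA j hj]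
        · exact Finset.sum_congr rfl fun j hj => by rw [hQA j hj]
    _ = ∑ j ∈ Finset.range (M+1+1), (P j - Q j) • y j := by
        have hsplit : ∑ j ∈ Finset.range (M+1+1), (P j - Q j) • y j
            = ∑ j ∈ Finset.range (M+1+1), P j • y j
              - ∑ j ∈ Finset.range (M+1+1), Q j • y j := by
          rw [← Finset.sum_sub_distrib]
          exact Finset.sum_congr rfl fun j _ => by rw [sub_smul]
        rw [hsplit, Finset.sum_range_succ' (fun j => P j • y j) (M+1),
            Finset.sum_range_succ (fun j => Q j • y j) (M+1), hQtop, hP0]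
        simp

lemma node_mem {a b : ℝ} (hab : a ≤ b) {N j : ℕ} (hj : j ≤ N) (hN : 1 ≤ N) :
    a + (j:ℝ) * (b-a) / (N:ℝ) ∈ Set.Icc a b := by
  have hN' : (0:ℝ) < N := by exact_mod_cast hN
  have hba : (0:ℝ) ≤ b - a := by linarith
  constructor
  · have : 0 ≤ (j:ℝ) * (b-a) / N := by positivity
    linarith
  · have hjN : (j:ℝ) ≤ N := by exact_mod_cast hj
    have : (j:ℝ)*(b-a)/N ≤ b - a := by
      rw [div_le_iff₀ hN']; nlinarith
    linarith

lemma sum_bern_sub_le (y : ℕ → E) {a b : ℝ} (hab : a < b) (N : ℕ) {t : ℝ}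
    (ht : t ∈ Set.Icc a b) (v : E) {C : ℝ} (hC0 : 0 ≤ C)
    (hy : ∀ j ∈ Finset.range (N+1), ‖y j - v‖ ≤ C) :
    ‖(∑ j ∈ Finset.range (N+1), bern a b N j t • y j) - v‖ ≤ C := by
  have h1 : (∑ j ∈ Finset.range (N+1), bern a b N j t • y j) - v
      = ∑ j ∈ Finset.range (N+1), bern a b N j t • (y j - v) := by
    rw [Finset.sum_congr rfl fun j _ => smul_sub (bern a b N j t) (y j) v,
        Finset.sum_sub_distrib, ← Finset.sum_smul, bern_sum hab, one_smul]
  rw [h1]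
  calc ‖∑ j ∈ Finset.range (N+1), bern a b N j t • (y j - v)‖
      ≤ ∑ j ∈ Finset.range (N+1), ‖bern a b N j t • (y j - v)‖ := norm_sum_le _ _
    _ ≤ ∑ j ∈ Finset.range (N+1), bern a b N j t * C := by
        apply Finset.sum_le_sum
        intro j hj
        rw [norm_smul, Real.norm_eq_abs, abs_of_nonneg (bern_nonneg ht N j)]
        exact mul_le_mul_of_nonneg_left (hy j hj) (bern_nonneg ht N j)
    _ = C := by rw [← Finset.sum_mul, bern_sum hab, one_mul]

lemma abs_sub_le_of_Icc {a b p q : ℝ} (hp : p ∈ Set.Icc a b) (hq : q ∈ Set.Icc a b) :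
    |p - q| ≤ b - a := by
  obtain ⟨h1, h2⟩ := hp; obtain ⟨h3, h4⟩ := hq
  rw [abs_sub_le_iff]; constructor <;> linarith

lemma bernApproxV_sub_le {n : ℕ} (x : ℝ → EuclideanSpace ℝ (Fin n)) {a b tf : ℝ}
    (hab : a < b) (hsub : Set.Icc a b ⊆ Set.Icc 0 tf) {C : ℝ} (hC0 : 0 ≤ C)
    (hC : ∀ p ∈ Set.Icc (0:ℝ) tf, ∀ q ∈ Set.Icc (0:ℝ) tf, ‖x p - x q‖ ≤ C * |p - q|)
    {N : ℕ} (hN : 1 ≤ N) {t : ℝ} (ht : t ∈ Set.Icc a b) :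
    ‖bernApproxV x a b N t - x t‖ ≤ C * (b - a) := by
  unfold bernApproxV
  apply sum_bern_sub_le _ hab N ht _ (by nlinarith)
  intro j hj
  have hjN : j ≤ N := Nat.lt_succ_iff.mp (Finset.mem_range.mp hj)
  have hmem := node_mem hab.le hjN hN
  refine (hC _ (hsub hmem) _ (hsub ht)).trans ?_
  exact mul_le_mul_of_nonneg_left (abs_sub_le_of_Icc hmem ht) hC0

lemma bernApproxV_deriv_sub_le {n : ℕ} (x : ℝ → EuclideanSpace ℝ (Fin n)) {a b tf : ℝ}
    (hab : a < b) (hsub : Set.Icc a b ⊆ Set.Icc (0:ℝ) tf)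
    (hx : ∀ s ∈ Set.Icc (0:ℝ) tf,
      HasDerivWithinAt x (derivWithin x (Set.Icc 0 tf) s) (Set.Icc 0 tf) s)
    {C : ℝ} (hC0 : 0 ≤ C)
    (hC : ∀ p ∈ Set.Icc (0:ℝ) tf, ∀ q ∈ Set.Icc (0:ℝ) tf,
      ‖derivWithin x (Set.Icc 0 tf) p - derivWithin x (Set.Icc 0 tf) q‖ ≤ C * |p - q|)
    (M : ℕ) {t : ℝ} (ht : t ∈ Set.Ioo a b) :
    ‖deriv (bernApproxV x a b (M+1)) t - derivWithin x (Set.Icc 0 tf) t‖ ≤ C * (b - a) := by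
  have hba : (0:ℝ) < b - a := by linarith [ht.1, ht.2, hab]
  set v := derivWithin x (Set.Icc 0 tf) t with hv
  set node : ℕ → ℝ := fun j => a + (j:ℝ) * (b-a) / ((M+1 : ℕ):ℝ) with hnode
  have hd : HasDerivAt (bernApproxV x a b (M+1))
      (∑ j ∈ Finset.range (M+1), (((M:ℝ)+1)/(b-a) * bern a b M j t) •
        (x (node (j+1)) - x (node j))) t :=
    sum_bern_hasDerivAt (fun j => x (node j)) hab M t
  rw [hd.deriv]
  have hrw : ∀ j ∈ Finset.range (M+1),
      (((M:ℝ)+1)/(b-a) * bern a b M j t) • (x (node (j+1)) - x (node j))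
      = bern a b M j t • ((((M:ℝ)+1)/(b-a)) • (x (node (j+1)) - x (node j))) := by
    intro j _
    rw [smul_smul, mul_comm]
  rw [Finset.sum_congr rfl hrw]
  have htIcc : t ∈ Set.Icc a b := ⟨ht.1.le, ht.2.le⟩
  apply sum_bern_sub_le _ hab M htIcc _ (by positivity)
  intro j hj
  have hjM : j ≤ M := Nat.lt_succ_iff.mp (Finset.mem_range.mp hj)
  -- mean value estimate
  set g : ℝ → EuclideanSpace ℝ (Fin n) := fun s => x s - s • v with hg
  have hgd : ∀ s ∈ Set.Icc a b,
      HasDerivWithinAt g (derivWithin x (Set.Icc 0 tf) s - v) (Set.Icc a b) s := by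
    intro s hs
    have h1 : HasDerivWithinAt x (derivWithin x (Set.Icc 0 tf) s) (Set.Icc a b) s :=
      (hx s (hsub hs)).mono hsub
    have h2 : HasDerivAt (fun s : ℝ => s • v) v s := by
      simpa using (hasDerivAt_id s).smul_const v
    exact h1.sub h2.hasDerivWithinAt
  have hbound : ∀ s ∈ Set.Icc a b, ‖derivWithin x (Set.Icc 0 tf) s - v‖ ≤ C * (b - a) := by
    intro s hs
    refine (hC s (hsub hs) t (hsub htIcc)).trans ?_
    exact mul_le_mul_of_nonneg_left (abs_sub_le_of_Icc hs htIcc) hC0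
  have hMpos : (0:ℝ) < (M:ℝ) + 1 := by positivity
  have hnj : node j ∈ Set.Icc a b := by
    have := node_mem (N := M+1) (j := j) hab.le (by omega) (by omega)
    simpa [hnode] using this
  have hnj1 : node (j+1) ∈ Set.Icc a b := by
    have := node_mem (N := M+1) (j := j+1) hab.le (by omega) (by omega)
    simpa [hnode] using this
  have key := Convex.norm_image_sub_le_of_norm_hasDerivWithin_le hgd hbound
    (convex_Icc a b) hnj hnj1
  have hdiff : node (j+1) - node j = (b-a)/((M:ℝ)+1) := by
    simp only [hnode]
    push_cast
    field_simp
    ring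
  have hgdiff : g (node (j+1)) - g (node j)
      = (x (node (j+1)) - x (node j)) - ((b-a)/((M:ℝ)+1)) • v := by
    simp only [hg]
    rw [← hdiff, sub_smul]
    abel
  rw [hgdiff, hdiff] at key
  have hnorm : ‖(b-a)/((M:ℝ)+1)‖ = (b-a)/((M:ℝ)+1) := by
    rw [Real.norm_eq_abs, abs_of_pos (by positivity)]
  rw [hnorm] at key
  have hrw2 : (((M:ℝ)+1)/(b-a)) • (x (node (j+1)) - x (node j)) - v
      = (((M:ℝ)+1)/(b-a)) • ((x (node (j+1)) - x (node j)) - ((b-a)/((M:ℝ)+1)) • v) := by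
    have hone : (((M:ℝ)+1)/(b-a)) * ((b-a)/((M:ℝ)+1)) = 1 := by field_simp
    rw [smul_sub, smul_sub, smul_smul, hone, one_smul, smul_sub]
  rw [hrw2, norm_smul, Real.norm_eq_abs, abs_of_pos (by positivity)]
  calc ((M:ℝ)+1)/(b-a) * ‖(x (node (j+1)) - x (node j)) - ((b-a)/((M:ℝ)+1)) • v‖
      ≤ ((M:ℝ)+1)/(b-a) * (C * (b-a) * ((b-a)/((M:ℝ)+1))) := by
        exact mul_le_mul_of_nonneg_left key (by positivity)
    _ = C * (b-a) := by field_simp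

lemma lip_bound {n : ℕ} (g : ℝ → EuclideanSpace ℝ (Fin n)) {tf : ℝ} (htf : 0 < tf)
    (hg : ContDiffOn ℝ 1 g (Set.Icc 0 tf)) :
    ∃ C : ℝ, 0 ≤ C ∧ ∀ p ∈ Set.Icc (0:ℝ) tf, ∀ q ∈ Set.Icc (0:ℝ) tf,
      ‖g p - g q‖ ≤ C * |p - q| := by
  have hu := uniqueDiffOn_Icc htf
  have hcont : ContinuousOn (derivWithin g (Set.Icc 0 tf)) (Set.Icc 0 tf) :=
    hg.continuousOn_derivWithin hu le_rfl
  obtain ⟨C, hC⟩ := (isCompact_Icc).exists_bound_of_continuousOn hcont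
  refine ⟨max C 0, le_max_right _ _, ?_⟩
  intro p hp q hq
  have := Convex.norm_image_sub_le_of_norm_hasDerivWithin_le
    (f := g) (f' := derivWithin g (Set.Icc 0 tf)) (C := max C 0)
    (fun s hs => ((hg.differentiableOn one_ne_zero) s hs).hasDerivWithinAt)
    (fun s hs => (hC s hs).trans (le_max_left _ _)) (convex_Icc _ _) hq hp
  simpa [Real.norm_eq_abs] using this

/-- feasibility, Theorem 1: if `x ∈ C³`, `u ∈ C²` satisfy the dynamics
`x' = f(x,u)` on `[0,t_f]` with `f` Lipschitz, then the dynamics residual of the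
composite Bernstein approximants can be made uniformly smaller than any `ε > 0`
by taking `K` and `N` large enough, at every non-knot time `t`. -/
theorem composite_bernstein_feasibility
    (nx nu : ℕ) (tf Ct : ℝ) (htf : 0 < tf) (hCt : 0 < Ct)
    (x : ℝ → EuclideanSpace ℝ (Fin nx)) (u : ℝ → EuclideanSpace ℝ (Fin nu))
    (f : EuclideanSpace ℝ (Fin nx) × EuclideanSpace ℝ (Fin nu) → EuclideanSpace ℝ (Fin nx))
    (L : NNReal) (hf : LipschitzWith L f)
    (hx : ContDiffOn ℝ 3 x (Set.Icc 0 tf)) (hu : ContDiffOn ℝ 2 u (Set.Icc 0 tf))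
    (hdyn : ∀ t ∈ Set.Icc (0 : ℝ) tf, derivWithin x (Set.Icc 0 tf) t = f (x t, u t))
    (T : ℕ → ℕ → ℝ)
    (hT0 : ∀ K, 1 ≤ K → T K 0 = 0) (hTK : ∀ K, 1 ≤ K → T K K = tf)
    (hmono : ∀ K, 1 ≤ K → ∀ k < K, T K k < T K (k + 1))
    (hsize : ∀ K, 1 ≤ K → ∀ k < K, T K (k + 1) - T K k ≤ Ct / (K : ℝ)) :
    ∀ ε > (0 : ℝ), ∃ Kstar Nstar : ℕ, 1 ≤ Kstar ∧ 1 ≤ Nstar ∧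
      ∀ K N : ℕ, Kstar ≤ K → Nstar ≤ N →
        ∀ k < K, ∀ t ∈ Set.Ioo (T K k) (T K (k + 1)),
          ‖deriv (bernApproxV x (T K k) (T K (k + 1)) N) t
              - f (bernApproxV x (T K k) (T K (k + 1)) N t,
                   bernApproxV u (T K k) (T K (k + 1)) N t)‖ ≤ ε := by
  intro ε hε
  have hud := uniqueDiffOn_Icc htf
  -- Lipschitz constants
  obtain ⟨Cx, hCx0, hCx⟩ := lip_bound x htf (hx.of_le (by norm_num))
  obtain ⟨Cu, hCu0, hCu⟩ := lip_bound u htf (hu.of_le (by norm_num))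
  obtain ⟨Cd, hCd0, hCd⟩ := lip_bound (derivWithin x (Set.Icc 0 tf)) htf
    (hx.derivWithin hud (by norm_num))
  set B : ℝ := Cd + (L : ℝ) * (Cx + Cu) + 1 with hB
  have hB0 : 0 < B := by positivity
  set Kstar : ℕ := max 1 ⌈B * Ct / ε⌉₊ with hKstar
  refine ⟨Kstar, 1, le_max_left _ _, le_rfl, ?_⟩
  intro K N hK hN k hk t ht
  have hK1 : 1 ≤ K := le_trans (le_max_left _ _) hK
  -- knot monotonicity
  have Tmono : ∀ i j : ℕ, i ≤ j → j ≤ K → T K i ≤ T K j := by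
    intro i j hij hjK
    induction j with
    | zero =>
      have : i = 0 := by omega
      rw [this]
    | succ m ih =>
      rcases Nat.lt_or_ge i (m+1) with h | h
      · have h1 : T K i ≤ T K m := ih (by omega) (by omega)
        have h2 := hmono K hK1 m (by omega)
        linarith
      · have : i = m+1 := by omega
        rw [this]
  -- interval setup
  set a := T K k with ha
  set b := T K (k+1) with hb
  have hab : a < b := hmono K hK1 k hk
  have ha0 : 0 ≤ a := by
    have := Tmono 0 k (by omega) (by omega)
    rw [hT0 K hK1] at this; exact this
  have hbtf : b ≤ tf := by
    have := Tmono (k+1) K (by omega) le_rfl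
    rw [hTK K hK1] at this; exact this
  have hsub : Set.Icc a b ⊆ Set.Icc (0:ℝ) tf := fun s hs => ⟨le_trans ha0 hs.1, le_trans hs.2 hbtf⟩
  have htIcc : t ∈ Set.Icc a b := ⟨ht.1.le, ht.2.le⟩
  have ht0tf : t ∈ Set.Icc (0:ℝ) tf := hsub htIcc
  obtain ⟨M, rfl⟩ : ∃ M, N = M + 1 := ⟨N - 1, by omega⟩
  -- derivative bound
  have hxHD : ∀ s ∈ Set.Icc (0:ℝ) tf,
      HasDerivWithinAt x (derivWithin x (Set.Icc 0 tf) s) (Set.Icc 0 tf) s :=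
    fun s hs => (((hx.of_le (by norm_num)).differentiableOn one_ne_zero) s hs).hasDerivWithinAt
  have hD := bernApproxV_deriv_sub_le x (tf := tf) hab hsub hxHD hCd0 hCd M (t := t) ht
  have hX := bernApproxV_sub_le x (tf := tf) hab hsub hCx0 hCx (N := M+1) (by omega) htIcc
  have hU := bernApproxV_sub_le u (tf := tf) hab hsub hCu0 hCu (N := M+1) (by omega) htIcc
  -- dynamics residual
  have hdynt := hdyn t ht0tf
  have hfdist : ‖f (x t, u t) - f (bernApproxV x a b (M+1) t, bernApproxV u a b (M+1) t)‖
      ≤ (L:ℝ) * ((Cx + Cu) * (b - a)) := by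
    have h1 := hf.dist_le_mul (x t, u t) (bernApproxV x a b (M+1) t, bernApproxV u a b (M+1) t)
    rw [dist_eq_norm] at h1
    refine h1.trans ?_
    have h2 : dist (x t, u t) (bernApproxV x a b (M+1) t, bernApproxV u a b (M+1) t)
        ≤ (Cx + Cu) * (b - a) := by
      rw [Prod.dist_eq]
      apply max_le
      · rw [dist_eq_norm, ← norm_sub_rev]
        refine hX.trans ?_
        have hba : (0:ℝ) ≤ b - a := by linarith
        nlinarith
      · rw [dist_eq_norm, ← norm_sub_rev]
        refine hU.trans ?_
        have hba : (0:ℝ) ≤ b - a := by linarith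
        nlinarith
    exact mul_le_mul_of_nonneg_left h2 L.2
  -- assemble
  have htri : ‖deriv (bernApproxV x a b (M+1)) t
        - f (bernApproxV x a b (M+1) t, bernApproxV u a b (M+1) t)‖
      ≤ Cd * (b-a) + (L:ℝ) * ((Cx + Cu) * (b-a)) := by
    have := norm_sub_le_norm_sub_add_norm_sub
      (deriv (bernApproxV x a b (M+1)) t) (derivWithin x (Set.Icc 0 tf) t)
      (f (bernApproxV x a b (M+1) t, bernApproxV u a b (M+1) t))
    refine this.trans ?_
    rw [← hdynt] at hfdist
    exact add_le_add hD hfdist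
  refine htri.trans ?_
  -- final size bound
  have hKpos : (0:ℝ) < K := by exact_mod_cast (by omega : 0 < K)
  have hba' : b - a ≤ Ct / K := hsize K hK1 k hk
  have hba0 : (0:ℝ) < b - a := by linarith
  have hceil : B * Ct / ε ≤ (K:ℝ) := by
    have h1 : (⌈B * Ct / ε⌉₊ : ℝ) ≤ K := by
      exact_mod_cast le_trans (le_max_right 1 ⌈B * Ct / ε⌉₊) hK
    exact le_trans (Nat.le_ceil _) h1
  have hBK : B * (Ct / K) ≤ ε := by
    rw [div_le_iff₀ hε] at hceil
    rw [mul_div_assoc'] at *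
    rw [div_le_iff₀ hKpos]
    linarith
  calc Cd * (b-a) + (L:ℝ) * ((Cx + Cu) * (b-a)) = (Cd + (L:ℝ)*(Cx+Cu)) * (b-a) := by ring
    _ ≤ B * (b-a) := by
        apply mul_le_mul_of_nonneg_right _ hba0.le
        rw [hB]; linarith
    _ ≤ B * (Ct / K) := mul_le_mul_of_nonneg_left hba' hB0.le
    _ ≤ ε := hBK
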